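/- Let V̇_a = −(n'(V)/(1+n(V)))·[(L_{ḡ₁}V)² + (L_{g₂}V)²] where n is class K∞ and C¹ with n' > 0 on (0,∞). Then along the adaptive closed-loop, V̇_a ≤ 0, and V̇_a = 0 at points with ρ > 0 implies L_{ḡ₁}V = L_{g₂}V = 0, which implies (ρ,δ,γ) = (0,0,0). In particular V̇_a < 0 for all (ρ,δ,γ) ≠ (0,0,0) with ρ > 0. -/
import Mathlib


noncomputable def z (δ γ : ℝ) : ℝ := γ + (1 / 2) * Real.arctan (2 * δ)

noncomputable def V (ρ δ γ : ℝ) : ℝ := ρ ^ 2 + δ ^ 2 + (z δ γ) ^ 2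

noncomputable def Lg1V (ρ δ γ : ℝ) : ℝ :=
  -2 * (ρ ^ 2 * Real.cos γ -
    Real.sin γ * (δ + (1 + 1 / (1 + 4 * δ ^ 2)) * z δ γ))

noncomputable def Lg2V (δ γ : ℝ) : ℝ := -2 * z δ γ

noncomputable def Vadot (n : ℝ → ℝ) (ρ δ γ : ℝ) : ℝ :=
  -(deriv n (V ρ δ γ) / (1 + n (V ρ δ γ))) *
    ((Lg1V ρ δ γ) ^ 2 + (Lg2V δ γ) ^ 2)

lemma V_pos {ρ δ γ : ℝ} (hρ : 0 < ρ) : 0 < V ρ δ γ := by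
  have := sq_nonneg δ
  have := sq_nonneg (z δ γ)
  have := pow_pos hρ 2
  unfold V; nlinarith

lemma key3 {ρ δ γ : ℝ} (hρ : 0 < ρ) (h1 : Lg1V ρ δ γ = 0)
    (h2 : Lg2V δ γ = 0) : False := by
  have hz : z δ γ = 0 := by unfold Lg2V at h2; linarith
  have hγ : γ = -(1 / 2) * Real.arctan (2 * δ) := by
    unfold z at hz; linarith
  have hb1 : -(Real.pi / 2) < Real.arctan (2 * δ) := Real.neg_pi_div_two_lt_arctan _
  have hb2 : Real.arctan (2 * δ) < Real.pi / 2 := Real.arctan_lt_pi_div_two _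
  have hpi : 0 < Real.pi := Real.pi_pos
  have hcos : 0 < Real.cos γ := by
    apply Real.cos_pos_of_mem_Ioo
    constructor <;> (rw [hγ]; linarith)
  have hsin : δ * Real.sin γ ≤ 0 := by
    rcases le_or_gt 0 δ with hδ | hδ
    · have ha : 0 ≤ Real.arctan (2 * δ) := by rw [← Real.arctan_zero]; exact Real.arctan_strictMono.monotone (by linarith)
      have hs : Real.sin γ ≤ 0 :=
        Real.sin_nonpos_of_nonpos_of_neg_pi_le (by rw [hγ]; linarith)
          (by rw [hγ]; linarith)
      exact mul_nonpos_of_nonneg_of_nonpos hδ hs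
    · have ha : Real.arctan (2 * δ) ≤ 0 := by rw [← Real.arctan_zero]; exact Real.arctan_strictMono.monotone (by linarith)
      have hs : 0 ≤ Real.sin γ :=
        Real.sin_nonneg_of_nonneg_of_le_pi (by rw [hγ]; linarith)
          (by rw [hγ]; linarith)
      exact mul_nonpos_of_nonpos_of_nonneg hδ.le hs
  have heq : ρ ^ 2 * Real.cos γ = Real.sin γ * δ := by
    unfold Lg1V at h1
    rw [hz] at h1
    nlinarith [h1]
  nlinarith [pow_pos hρ 2, mul_pos (pow_pos hρ 2) hcos]

theorem adaptive_lyapunov_derivative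
    (n : ℝ → ℝ)
    -- n is class K∞ and C¹ with n' > 0 on (0,∞)
    (hKc : ContinuousOn n (Set.Ici 0)) (hKm : StrictMonoOn n (Set.Ici 0))
    (hK0 : n 0 = 0) (hKinf : Filter.Tendsto n Filter.atTop Filter.atTop)
    (hC1 : ContDiff ℝ 1 n)
    (hn' : ∀ x : ℝ, 0 < x → 0 < deriv n x) :
    (∀ ρ δ γ : ℝ, 0 < ρ → Vadot n ρ δ γ ≤ 0) ∧
    (∀ ρ δ γ : ℝ, 0 < ρ → Vadot n ρ δ γ = 0 →
        Lg1V ρ δ γ = 0 ∧ Lg2V δ γ = 0) ∧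
    (∀ ρ δ γ : ℝ, 0 < ρ → Lg1V ρ δ γ = 0 → Lg2V δ γ = 0 →
        (ρ, δ, γ) = ((0 : ℝ), (0 : ℝ), (0 : ℝ))) ∧
    (∀ ρ δ γ : ℝ, 0 < ρ → (ρ, δ, γ) ≠ ((0:ℝ), (0:ℝ), (0:ℝ)) →
        Vadot n ρ δ γ < 0) := by
  have hc : ∀ ρ δ γ : ℝ, 0 < ρ →
      0 < deriv n (V ρ δ γ) / (1 + n (V ρ δ γ)) := by
    intro ρ δ γ hρ
    have hV := V_pos (δ := δ) (γ := γ) hρ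
    have hd := hn' _ hV
    have hnV : 0 < n (V ρ δ γ) := by
      have := hKm (Set.self_mem_Ici) (Set.mem_Ici.mpr hV.le) hV
      linarith [hK0 ▸ this]
    exact div_pos hd (by linarith)
  refine ⟨?_, ?_, ?_, ?_⟩
  · intro ρ δ γ hρ
    have := hc ρ δ γ hρ
    have h1 := sq_nonneg (Lg1V ρ δ γ)
    have h2 := sq_nonneg (Lg2V δ γ)
    unfold Vadot
    nlinarith
  · intro ρ δ γ hρ h0
    have hcp := hc ρ δ γ hρ
    have h1 := sq_nonneg (Lg1V ρ δ γ)
    have h2 := sq_nonneg (Lg2V δ γ)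
    unfold Vadot at h0
    constructor <;> [(have : Lg1V ρ δ γ ^ 2 = 0 := by nlinarith);
      (have : Lg2V δ γ ^ 2 = 0 := by nlinarith)] <;>
      exact sq_eq_zero_iff.mp this
  · intro ρ δ γ hρ h1 h2
    exact absurd (key3 hρ h1 h2) (by simp)
  · intro ρ δ γ hρ hne
    have hcp := hc ρ δ γ hρ
    have h1 := sq_nonneg (Lg1V ρ δ γ)
    have h2 := sq_nonneg (Lg2V δ γ)
    have hs : 0 < Lg1V ρ δ γ ^ 2 + Lg2V δ γ ^ 2 := by
      rcases lt_or_eq_of_le (by linarith : (0:ℝ) ≤ Lg1V ρ δ γ ^ 2 + Lg2V δ γ ^ 2)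
        with h | h
      · exact h
      · exfalso
        apply key3 hρ
        · exact sq_eq_zero_iff.mp (by nlinarith)
        · exact sq_eq_zero_iff.mp (by nlinarith)
    unfold Vadot
    nlinarith
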